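/- Let m = 3 and let (p₁,p₂,p₃) be uniformly distributed on the simplex {p ∈ (0,1)³ : p₁+p₂+p₃=1}. Let p⁽¹⁾ ≥ p⁽²⁾ ≥ p⁽³⁾ be the order statistics. Then E[(1/3)(p⁽¹⁾ − p⁽³⁾)(p⁽²⁾ − p⁽³⁾)] = 1/36. -/

import Mathlib

open MeasureTheory Set

-- pointwise identity removing max
lemma key_id (x y : ℝ) :
    (2 : ℝ) * ((1 / 3) *
      ((max x (max y (1 - x - y)) - min x (min y (1 - x - y))) *
       ((1 - max x (max y (1 - x - y)) - min x (min y (1 - x - y))) -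
         min x (min y (1 - x - y))))) =
    2/3 * (x*y + y*(1-x-y) + (1-x-y)*x)
      + 2 * (min x (min y (1-x-y)))^2 - 4/3 * (min x (min y (1-x-y))) := by
  simp only [max_def, min_def]
  split_ifs <;> (try ring) <;> (exfalso; linarith)

-- antiderivative helper
lemma integral_cubic (a b c0 c1 c2 c3 : ℝ) :
    ∫ t in a..b, (c0 + c1*t + c2*t^2 + c3*t^3) =
      (c0*b + c1/2*b^2 + c2/3*b^3 + c3/4*b^4) - (c0*a + c1/2*a^2 + c2/3*a^3 + c3/4*a^4) := by
  have h : ∀ t : ℝ, HasDerivAt (fun t : ℝ => c0*t + c1/2*t^2 + c2/3*t^3 + c3/4*t^4)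
      (c0 + c1*t + c2*t^2 + c3*t^3) t := by
    intro t
    have := ((((hasDerivAt_id' (x := t)).const_mul c0).add
        ((hasDerivAt_pow 2 t).const_mul (c1/2))).add
        ((hasDerivAt_pow 3 t).const_mul (c2/3))).add
        ((hasDerivAt_pow 4 t).const_mul (c3/4))
    refine HasDerivAt.congr_deriv this ?_
    push_cast; ring
  rw [intervalIntegral.integral_eq_sub_of_hasDerivAt (fun t _ => h t)
    ((by fun_prop : Continuous fun t : ℝ => c0 + c1*t + c2*t^2 + c3*t^3).intervalIntegrable a b)]

-- Fubini for the triangle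
lemma tri_eq : {p : ℝ × ℝ | 0 < p.1 ∧ 0 < p.2 ∧ p.1 + p.2 < 1}
    = regionBetween (fun _ => (0:ℝ)) (fun x => 1 - x) (Ioo 0 1) := by
  ext p
  simp only [regionBetween, mem_setOf_eq, mem_Ioo]
  constructor
  · rintro ⟨h1, h2, h3⟩; exact ⟨⟨h1, by linarith⟩, h2, by linarith⟩
  · rintro ⟨⟨h1, h2⟩, h3, h4⟩; exact ⟨h1, h3, by linarith⟩

lemma tri_meas : MeasurableSet {p : ℝ × ℝ | 0 < p.1 ∧ 0 < p.2 ∧ p.1 + p.2 < 1} := by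
  rw [tri_eq]
  exact measurableSet_regionBetween measurable_const (by fun_prop) measurableSet_Ioo

lemma fubini_tri (f : ℝ × ℝ → ℝ) (hf : Continuous f) :
    ∫ p in {p : ℝ × ℝ | 0 < p.1 ∧ 0 < p.2 ∧ p.1 + p.2 < 1}, f p
      = ∫ x in Ioo (0:ℝ) 1, ∫ y in Ioo 0 (1-x), f (x, y) := by
  have hsub : {p : ℝ × ℝ | 0 < p.1 ∧ 0 < p.2 ∧ p.1 + p.2 < 1}
      ⊆ (Icc 0 1 ×ˢ Icc 0 1 : Set (ℝ × ℝ)) := by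
    rintro ⟨x, y⟩ ⟨h1, h2, h3⟩
    exact ⟨⟨h1.le, by linarith⟩, ⟨h2.le, by linarith⟩⟩
  have hint : IntegrableOn f {p : ℝ × ℝ | 0 < p.1 ∧ 0 < p.2 ∧ p.1 + p.2 < 1} :=
    (hf.continuousOn.integrableOn_compact (isCompact_Icc.prod isCompact_Icc)).mono_set hsub
  rw [← integral_indicator tri_meas]
  rw [Measure.volume_eq_prod] at hint ⊢
  rw [integral_prod _ ((integrable_indicator_iff tri_meas).2 hint)]
  have hpt : ∀ x : ℝ,
      (∫ y, ({p : ℝ × ℝ | 0 < p.1 ∧ 0 < p.2 ∧ p.1 + p.2 < 1}.indicator f) (x, y))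
        = (Ioo (0:ℝ) 1).indicator (fun x => ∫ y in Ioo 0 (1-x), f (x, y)) x := by
    intro x
    by_cases hx : x ∈ Ioo (0:ℝ) 1
    · rw [indicator_of_mem hx]
      have : ∀ y : ℝ, ({p : ℝ × ℝ | 0 < p.1 ∧ 0 < p.2 ∧ p.1 + p.2 < 1}.indicator f) (x, y)
          = (Ioo (0:ℝ) (1-x)).indicator (fun y => f (x, y)) y := by
        intro y
        have hiff : ((x, y) ∈ {p : ℝ × ℝ | 0 < p.1 ∧ 0 < p.2 ∧ p.1 + p.2 < 1})
            ↔ y ∈ Ioo (0:ℝ) (1-x) := by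
          simp only [mem_setOf_eq, mem_Ioo]
          constructor
          · rintro ⟨h1, h2, h3⟩; exact ⟨h2, by linarith⟩
          · rintro ⟨h1, h2⟩; exact ⟨hx.1, h1, by linarith⟩
        simp only [indicator_apply, hiff]
      rw [funext this, integral_indicator measurableSet_Ioo]
    · have : ∀ y : ℝ, ({p : ℝ × ℝ | 0 < p.1 ∧ 0 < p.2 ∧ p.1 + p.2 < 1}.indicator f) (x, y) = 0 := by
        intro y
        apply indicator_of_notMem
        rintro ⟨h1, h2, h3⟩
        exact hx ⟨h1, by linarith⟩
      rw [funext this, integral_zero, indicator_of_notMem hx]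
  rw [funext hpt, integral_indicator measurableSet_Ioo]

-- the rewritten integrand
noncomputable def gg (x y : ℝ) : ℝ :=
  2/3 * (x*y + y*(1-x-y) + (1-x-y)*x)
    + 2 * (min x (min y (1-x-y)))^2 - 4/3 * (min x (min y (1-x-y)))

lemma gg_cont : Continuous fun p : ℝ × ℝ => gg p.1 p.2 := by
  unfold gg; fun_prop

lemma gg_cont_y (x : ℝ) : Continuous fun y : ℝ => gg x y := by
  unfold gg; fun_prop

-- inner integral, case 0 < x < 1/3
lemma innerB {x : ℝ} (hx0 : 0 < x) (hx : x < 1/3) :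
    (∫ y in Ioo 0 (1-x), gg x y) = 1/9 - x + 11/3*x^2 - 37/9*x^3 := by
  have hI : ∀ a b : ℝ, IntervalIntegrable (fun y => gg x y) volume a b :=
    fun a b => (gg_cont_y x).intervalIntegrable a b
  rw [← integral_Ioc_eq_integral_Ioo, ← intervalIntegral.integral_of_le (by linarith)]
  have hs1 : (∫ y in (0:ℝ)..(1-x), gg x y)
      = (∫ y in (0:ℝ)..x, gg x y) + (∫ y in x..(1-2*x), gg x y)
        + (∫ y in (1-2*x)..(1-x), gg x y) := by
    rw [intervalIntegral.integral_add_adjacent_intervals (hI 0 x) (hI x (1-2*x)),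
      intervalIntegral.integral_add_adjacent_intervals (hI 0 (1-2*x)) (hI (1-2*x) (1-x))]
  have e1 : (∫ y in (0:ℝ)..x, gg x y)
      = ∫ y in (0:ℝ)..x, ((2/3*x - 2/3*x^2) + (-2/3 - 2/3*x)*y + 4/3*y^2 + 0*y^3) := by
    apply intervalIntegral.integral_congr
    intro y hy
    rw [uIcc_of_le (by linarith)] at hy
    obtain ⟨hy0, hy1⟩ := hy
    have h1 : min y (1-x-y) = y := min_eq_left (by linarith)
    have h2 : min x y = y := min_eq_right hy1
    unfold gg; rw [h1, h2]; ring
  have e2 : (∫ y in x..(1-2*x), gg x y)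
      = ∫ y in x..(1-2*x), ((-2/3*x + 4/3*x^2) + (2/3 - 2/3*x)*y + (-2/3)*y^2 + 0*y^3) := by
    apply intervalIntegral.integral_congr
    intro y hy
    rw [uIcc_of_le (by linarith)] at hy
    obtain ⟨hy0, hy1⟩ := hy
    have h2 : min x (min y (1-x-y)) = x := min_eq_left (le_min hy0 (by linarith))
    unfold gg; rw [h2]; ring
  have e3 : (∫ y in (1-2*x)..(1-x), gg x y)
      = ∫ y in (1-2*x)..(1-x), ((2/3 - 2*x + 4/3*x^2) + (-2 + 10/3*x)*y + (4/3)*y^2 + 0*y^3) := by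
    apply intervalIntegral.integral_congr
    intro y hy
    rw [uIcc_of_le (by linarith)] at hy
    obtain ⟨hy0, hy1⟩ := hy
    have h1 : min y (1-x-y) = 1-x-y := min_eq_right (by linarith)
    have h2 : min x (1-x-y) = 1-x-y := min_eq_right (by linarith)
    unfold gg; rw [h1, h2]; ring
  rw [hs1, e1, e2, e3, integral_cubic, integral_cubic, integral_cubic]
  ring

-- inner integral, case 1/3 ≤ x < 1
lemma innerA {x : ℝ} (hx0 : 1/3 ≤ x) (hx : x < 1) :
    (∫ y in Ioo 0 (1-x), gg x y) = -1/18 + 1/2*x - 5/6*x^2 + 7/18*x^3 := by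
  have hI : ∀ a b : ℝ, IntervalIntegrable (fun y => gg x y) volume a b :=
    fun a b => (gg_cont_y x).intervalIntegrable a b
  rw [← integral_Ioc_eq_integral_Ioo, ← intervalIntegral.integral_of_le (by linarith)]
  have hs1 : (∫ y in (0:ℝ)..(1-x), gg x y)
      = (∫ y in (0:ℝ)..((1-x)/2), gg x y) + (∫ y in ((1-x)/2)..(1-x), gg x y) := by
    rw [intervalIntegral.integral_add_adjacent_intervals (hI 0 ((1-x)/2)) (hI ((1-x)/2) (1-x))]
  have e1 : (∫ y in (0:ℝ)..((1-x)/2), gg x y)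
      = ∫ y in (0:ℝ)..((1-x)/2), ((2/3*x - 2/3*x^2) + (-2/3 - 2/3*x)*y + 4/3*y^2 + 0*y^3) := by
    apply intervalIntegral.integral_congr
    intro y hy
    rw [uIcc_of_le (by linarith)] at hy
    obtain ⟨hy0, hy1⟩ := hy
    have h1 : min y (1-x-y) = y := min_eq_left (by linarith)
    have h2 : min x y = y := min_eq_right (by linarith)
    unfold gg; rw [h1, h2]; ring
  have e2 : (∫ y in ((1-x)/2)..(1-x), gg x y)
      = ∫ y in ((1-x)/2)..(1-x), ((2/3 - 2*x + 4/3*x^2) + (-2 + 10/3*x)*y + (4/3)*y^2 + 0*y^3) := by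
    apply intervalIntegral.integral_congr
    intro y hy
    rw [uIcc_of_le (by linarith)] at hy
    obtain ⟨hy0, hy1⟩ := hy
    have h1 : min y (1-x-y) = 1-x-y := min_eq_right (by linarith)
    have h2 : min x (1-x-y) = 1-x-y := min_eq_right (by linarith)
    unfold gg; rw [h1, h2]; ring
  rw [hs1, e1, e2, integral_cubic, integral_cubic]
  ring

theorem stmt_17 :
    (∫ p in {p : ℝ × ℝ | 0 < p.1 ∧ 0 < p.2 ∧ p.1 + p.2 < 1},
        (2 : ℝ) * ((1 / 3) *
          ((max p.1 (max p.2 (1 - p.1 - p.2)) - min p.1 (min p.2 (1 - p.1 - p.2))) *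
           ((1 - max p.1 (max p.2 (1 - p.1 - p.2)) - min p.1 (min p.2 (1 - p.1 - p.2))) -
             min p.1 (min p.2 (1 - p.1 - p.2)))))) = 1 / 36 := by
  have hrw : (∫ p in {p : ℝ × ℝ | 0 < p.1 ∧ 0 < p.2 ∧ p.1 + p.2 < 1},
        (2 : ℝ) * ((1 / 3) *
          ((max p.1 (max p.2 (1 - p.1 - p.2)) - min p.1 (min p.2 (1 - p.1 - p.2))) *
           ((1 - max p.1 (max p.2 (1 - p.1 - p.2)) - min p.1 (min p.2 (1 - p.1 - p.2))) -
             min p.1 (min p.2 (1 - p.1 - p.2))))))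
      = ∫ p in {p : ℝ × ℝ | 0 < p.1 ∧ 0 < p.2 ∧ p.1 + p.2 < 1}, gg p.1 p.2 := by
    apply setIntegral_congr_fun tri_meas
    intro p _
    exact key_id p.1 p.2
  rw [hrw]
  rw [fubini_tri (fun p => gg p.1 p.2) gg_cont]
  have hsplit : Ioo (0:ℝ) 1 = Ioo (0:ℝ) (1/3) ∪ Ico (1/3) 1 :=
    (Ioo_union_Ico_eq_Ioo (by norm_num) (by norm_num)).symm
  have hdisj : Disjoint (Ioo (0:ℝ) (1/3)) (Ico (1/3) 1) := by
    rw [Set.disjoint_left]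
    rintro a ⟨_, h1⟩ ⟨h2, _⟩
    exact absurd h1 (not_lt.mpr h2)
  set F : ℝ → ℝ := fun x => ∫ y in Ioo 0 (1-x), gg x y with hF
  have hBeq : EqOn F (fun x => 1/9 - x + 11/3*x^2 - 37/9*x^3) (Ioo 0 (1/3)) :=
    fun x hx => innerB hx.1 hx.2
  have hAeq : EqOn F (fun x => -1/18 + 1/2*x - 5/6*x^2 + 7/18*x^3) (Ico (1/3) 1) :=
    fun x hx => innerA hx.1 hx.2
  have hBint : IntegrableOn F (Ioo 0 (1/3)) := by
    apply IntegrableOn.congr_fun _ hBeq.symm measurableSet_Ioo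
    exact (((by fun_prop : Continuous fun x : ℝ => 1/9 - x + 11/3*x^2 - 37/9*x^3).intervalIntegrable
      0 (1/3)).1).mono_set Ioo_subset_Ioc_self
  have hAint : IntegrableOn F (Ico (1/3) 1) := by
    apply IntegrableOn.congr_fun _ hAeq.symm measurableSet_Ico
    exact ((by fun_prop : Continuous fun x : ℝ => -1/18 + 1/2*x - 5/6*x^2 + 7/18*x^3
      ).continuousOn.integrableOn_compact isCompact_Icc).mono_set Ico_subset_Icc_self
  rw [show (∫ x in Ioo (0:ℝ) 1, ∫ y in Ioo 0 (1-x), gg x y) = ∫ x in Ioo (0:ℝ) 1, F x from rfl]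
  rw [hsplit, setIntegral_union hdisj measurableSet_Ico hBint hAint,
    setIntegral_congr_fun measurableSet_Ioo hBeq, setIntegral_congr_fun measurableSet_Ico hAeq,
    ← integral_Ioc_eq_integral_Ioo, ← intervalIntegral.integral_of_le (by norm_num),
    integral_Ico_eq_integral_Ioo, ← integral_Ioc_eq_integral_Ioo,
    ← intervalIntegral.integral_of_le (by norm_num)]
  have c1 : (∫ x in (0:ℝ)..(1/3), (1/9 - x + 11/3*x^2 - 37/9*x^3))
      = ∫ x in (0:ℝ)..(1/3), (1/9 + (-1)*x + 11/3*x^2 + (-37/9)*x^3) := by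
    apply intervalIntegral.integral_congr; intro y _; ring
  have c2 : (∫ x in (1/3:ℝ)..1, (-1/18 + 1/2*x - 5/6*x^2 + 7/18*x^3))
      = ∫ x in (1/3:ℝ)..1, (-1/18 + (1/2)*x + (-5/6)*x^2 + (7/18)*x^3) := by
    apply intervalIntegral.integral_congr; intro y _; ring
  rw [c1, c2, integral_cubic, integral_cubic]
  norm_num
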